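/- For any probability distribution p on a finite set V with |V| = K, ∑_{i∈V} (1 − p(i)) · ln(1/(1 − p(i))) ≤ (1 − p(i*)) · (ln(1/(1 − p(i*))) + 1) for any fixed i* ∈ V, provided p(i) < 1 for all i ≠ i* (with the convention 0·ln(1/0) = 0 when p(i*) = 1). -/

import Mathlib

lemma key_bound (x : ℝ) (h0 : 0 ≤ x) (h1 : x ≤ 1) :
    (1 - x) * Real.log (1 / (1 - x)) ≤ x := by
  rcases eq_or_lt_of_le h1 with h | h
  · simp [← h, h0]
  · have hpos : 0 < 1 - x := by linarith
    have hlog : Real.log (1 / (1 - x)) ≤ 1 / (1 - x) - 1 :=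
      Real.log_le_sub_one_of_pos (by positivity)
    calc (1 - x) * Real.log (1 / (1 - x)) ≤ (1 - x) * (1 / (1 - x) - 1) := by
          exact mul_le_mul_of_nonneg_left hlog hpos.le
      _ = x := by field_simp; ring

theorem sum_one_sub_log_bound {V : Type*} [Fintype V] (p : V → ℝ)
    (h0 : ∀ i, 0 ≤ p i) (h1 : ∀ i, p i ≤ 1) (hsum : ∑ i, p i = 1)
    (istar : V) (hlt : ∀ i, i ≠ istar → p i < 1) :
    ∑ i, (1 - p i) * Real.log (1 / (1 - p i)) ≤
      (1 - p istar) * (Real.log (1 / (1 - p istar)) + 1) := by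
  classical
  have hmem : istar ∈ Finset.univ := Finset.mem_univ istar
  rw [← Finset.add_sum_erase _ _ hmem]
  have hrest : ∑ i ∈ Finset.univ.erase istar, (1 - p i) * Real.log (1 / (1 - p i)) ≤
      ∑ i ∈ Finset.univ.erase istar, p i :=
    Finset.sum_le_sum fun i _ => key_bound (p i) (h0 i) (h1 i)
  have hsum' : ∑ i ∈ Finset.univ.erase istar, p i = 1 - p istar := by
    have := Finset.add_sum_erase _ p hmem
    rw [hsum] at this
    linarith
  rw [hsum'] at hrest
  linarith
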